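/- Let Y ∈ S = T \ (U_1 ∪ U_2), let X ∈ A_Y (i.e., ‖x_i − y_i‖ < ε(Y) for all i ∈ N), let K ∈ {A,B}, and let C be a maximal clique of the δ_K-proximity graph G_{δ_K}(X) with C ∩ N_mn ≠ ∅; set C_mn = C ∩ N_mn and C_mj = C ∩ N_mj. Then every minimizer ᾱ_C over injective maps α : C_mn → C_mj of ‖[x_j]_{j∈C_mn} − [x_{α(j)}]_{j∈C_mn}‖ coincides with the restriction of α_Y to C_mn: ᾱ_C(j) = α_Y(j) for all j ∈ C_mn. -/
import Mathlib


/-- Group A: agents `1,…,n_A` (zero-indexed: `i < n_A`). -/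
def grpA (n nA : ℕ) : Finset (Fin n) := Finset.univ.filter fun i => (i : ℕ) < nA

/-- Group B: agents `n_A+1,…,n` (zero-indexed: `n_A ≤ i`). -/
def grpB (n nA : ℕ) : Finset (Fin n) := Finset.univ.filter fun i => nA ≤ (i : ℕ)

/-- `N_mn`, `N_mj` is an admissible minority/majority assignment of the two groups:
one of them is group A and the other group B, and the minority one has at most as many
agents as the majority one. -/
def MinorityMajority (n nA : ℕ) (Nmn Nmj : Finset (Fin n)) : Prop :=
  (Nmn = grpA n nA ∧ Nmj = grpB n nA ∧ (grpA n nA).card ≤ (grpB n nA).card) ∨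
  (Nmn = grpB n nA ∧ Nmj = grpA n nA ∧ (grpB n nA).card ≤ (grpA n nA).card)

/-- `α` is a one-to-one (injective) map from `Nmn` into `Nmj`. -/
def IsMatching {n : ℕ} (Nmn Nmj : Finset (Fin n)) (α : Fin n → Fin n) : Prop :=
  Set.InjOn α ↑Nmn ∧ ∀ i ∈ Nmn, α i ∈ Nmj

/-- The matching cost `‖[y_j]_{j∈Nmn} − [y_{α(j)}]_{j∈Nmn}‖` (Frobenius norm). -/
noncomputable def matchCost {d n : ℕ} (Nmn : Finset (Fin n))
    (Y : Fin n → EuclideanSpace ℝ (Fin d)) (α : Fin n → Fin n) : ℝ :=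
  Real.sqrt (∑ j ∈ Nmn, ‖Y j - Y (α j)‖ ^ 2)

/-- `α` is a minimizer of the matching cost over all injective maps `Nmn → Nmj`. -/
def IsMinMatching {d n : ℕ} (Nmn Nmj : Finset (Fin n))
    (Y : Fin n → EuclideanSpace ℝ (Fin d)) (α : Fin n → Fin n) : Prop :=
  IsMatching Nmn Nmj α ∧
    ∀ β, IsMatching Nmn Nmj β → matchCost Nmn Y α ≤ matchCost Nmn Y β

/-- The target set `T` of matched configurations. -/
def targetT {d n : ℕ} (Nmn Nmj : Finset (Fin n)) :
    Set (Fin n → EuclideanSpace ℝ (Fin d)) :=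
  {Y | ∃ α, IsMatching Nmn Nmj α ∧ ∀ i ∈ Nmn, Y i = Y (α i)}

/-- `U_1`: configurations in which two distinct majority agents coincide. -/
def setU1 {d n : ℕ} (Nmj : Finset (Fin n)) : Set (Fin n → EuclideanSpace ℝ (Fin d)) :=
  {Y | ∃ i ∈ Nmj, ∃ j ∈ Nmj, i ≠ j ∧ Y i = Y j}

/-- `U_2`: configurations in which some minority-majority pair is exactly at distance
`δ_A` or `δ_B`. -/
def setU2 {d n : ℕ} (δA δB : ℝ) (Nmn Nmj : Finset (Fin n)) :
    Set (Fin n → EuclideanSpace ℝ (Fin d)) :=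
  {Y | ∃ i ∈ Nmn, ∃ j ∈ Nmj, ‖Y i - Y j‖ = δA ∨ ‖Y i - Y j‖ = δB}

/-- `ε(Y) = min{ε_0(Y), ε_A(Y), ε_B(Y), δ_B/2}` with
`ε_0(Y) = (1/6) min{‖y_i − y_j‖ : i ∈ N_mn, j ∈ N_mj, j ≠ α_Y(i)}` and
`ε_K(Y) = (1/2) min{|δ_K − ‖y_i − y_j‖| : i ∈ N_mn, j ∈ N_mj, j ≠ α_Y(i)}`,
`K = A, B`, where minima over the empty set are interpreted as `+∞` (implemented by
taking the minimum of all listed quantities together with `δ_B/2`). -/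
noncomputable def epsY {d n : ℕ} (δA δB : ℝ) (Nmn Nmj : Finset (Fin n))
    (αY : Fin n → Fin n) (Y : Fin n → EuclideanSpace ℝ (Fin d)) : ℝ :=
  (insert (δB / 2)
    ((((Nmn ×ˢ Nmj).filter fun p => p.2 ≠ αY p.1).image
        fun p => (1 / 6 : ℝ) * ‖Y p.1 - Y p.2‖) ∪
      (((Nmn ×ˢ Nmj).filter fun p => p.2 ≠ αY p.1).image
        fun p => (1 / 2 : ℝ) * |δA - ‖Y p.1 - Y p.2‖|) ∪
      (((Nmn ×ˢ Nmj).filter fun p => p.2 ≠ αY p.1).image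
        fun p => (1 / 2 : ℝ) * |δB - ‖Y p.1 - Y p.2‖|))).min'
    (Finset.insert_nonempty _ _)

/-- `C` is a clique of the `δ`-proximity graph `G_δ(X)`: any two distinct nodes of `C`
are within distance `δ`. -/
def IsPCl {d n : ℕ} (δ : ℝ) (X : Fin n → EuclideanSpace ℝ (Fin d))
    (C : Finset (Fin n)) : Prop :=
  ∀ i ∈ C, ∀ j ∈ C, i ≠ j → ‖X i - X j‖ ≤ δ

/-- `C` is a maximal clique of the `δ`-proximity graph `G_δ(X)`. -/
def IsMaxPCl {d n : ℕ} (δ : ℝ) (X : Fin n → EuclideanSpace ℝ (Fin d))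
    (C : Finset (Fin n)) : Prop :=
  IsPCl δ X C ∧ ∀ C', IsPCl δ X C' → C ⊆ C' → C' = C

lemma epsY_le_half {d n : ℕ} (δA δB : ℝ) (Nmn Nmj : Finset (Fin n))
    (αY : Fin n → Fin n) (Y : Fin n → EuclideanSpace ℝ (Fin d)) :
    epsY δA δB Nmn Nmj αY Y ≤ δB / 2 :=
  Finset.min'_le _ _ (Finset.mem_insert_self _ _)

lemma epsY_le_norm {d n : ℕ} (δA δB : ℝ) (Nmn Nmj : Finset (Fin n))
    (αY : Fin n → Fin n) (Y : Fin n → EuclideanSpace ℝ (Fin d))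
    {i j : Fin n} (hi : i ∈ Nmn) (hj : j ∈ Nmj) (hne : j ≠ αY i) :
    epsY δA δB Nmn Nmj αY Y ≤ (1 / 6 : ℝ) * ‖Y i - Y j‖ :=
  Finset.min'_le _ _ (Finset.mem_insert_of_mem (Finset.mem_union_left _
    (Finset.mem_union_left _ (Finset.mem_image.mpr
      ⟨(i, j), Finset.mem_filter.mpr ⟨Finset.mem_product.mpr ⟨hi, hj⟩, hne⟩, rfl⟩))))

lemma epsY_le_absA {d n : ℕ} (δA δB : ℝ) (Nmn Nmj : Finset (Fin n))
    (αY : Fin n → Fin n) (Y : Fin n → EuclideanSpace ℝ (Fin d))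
    {i j : Fin n} (hi : i ∈ Nmn) (hj : j ∈ Nmj) (hne : j ≠ αY i) :
    epsY δA δB Nmn Nmj αY Y ≤ (1 / 2 : ℝ) * |δA - ‖Y i - Y j‖| :=
  Finset.min'_le _ _ (Finset.mem_insert_of_mem (Finset.mem_union_left _
    (Finset.mem_union_right _ (Finset.mem_image.mpr
      ⟨(i, j), Finset.mem_filter.mpr ⟨Finset.mem_product.mpr ⟨hi, hj⟩, hne⟩, rfl⟩))))

lemma epsY_le_absB {d n : ℕ} (δA δB : ℝ) (Nmn Nmj : Finset (Fin n))
    (αY : Fin n → Fin n) (Y : Fin n → EuclideanSpace ℝ (Fin d))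
    {i j : Fin n} (hi : i ∈ Nmn) (hj : j ∈ Nmj) (hne : j ≠ αY i) :
    epsY δA δB Nmn Nmj αY Y ≤ (1 / 2 : ℝ) * |δB - ‖Y i - Y j‖| :=
  Finset.min'_le _ _ (Finset.mem_insert_of_mem (Finset.mem_union_right _
    (Finset.mem_image.mpr
      ⟨(i, j), Finset.mem_filter.mpr ⟨Finset.mem_product.mpr ⟨hi, hj⟩, hne⟩, rfl⟩)))

/-- Let `Y ∈ S`, `X ∈ A_Y`, `K ∈ {A,B}`, and let `C` be a maximal clique of
`G_{δ_K}(X)` with `C ∩ N_mn ≠ ∅`; set `C_mn = C ∩ N_mn`, `C_mj = C ∩ N_mj`.  Then any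
minimizer `ᾱ_C` of the matching cost over injective maps `C_mn → C_mj` coincides on
`C_mn` with the restriction of `α_Y`. -/
theorem clique_matching_agrees_with_global
    {d n : ℕ} (nA : ℕ) (hnA : 0 < nA) (hnAn : nA < n)
    (δA δB : ℝ) (hB : 0 < δB) (hAB : δB < δA)
    (Nmn Nmj : Finset (Fin n)) (hmm : MinorityMajority n nA Nmn Nmj)
    (Y : Fin n → EuclideanSpace ℝ (Fin d))
    (hY : Y ∈ targetT Nmn Nmj \ (setU1 Nmj ∪ setU2 δA δB Nmn Nmj))
    (αY : Fin n → Fin n) (hαY : IsMinMatching Nmn Nmj Y αY)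
    (X : Fin n → EuclideanSpace ℝ (Fin d))
    (hX : ∀ i, ‖X i - Y i‖ < epsY δA δB Nmn Nmj αY Y)
    (δK : ℝ) (hK : δK = δA ∨ δK = δB)
    (C : Finset (Fin n)) (hC : IsMaxPCl δK X C) (hCne : (C ∩ Nmn).Nonempty)
    (αC : Fin n → Fin n) (hαC : IsMinMatching (C ∩ Nmn) (C ∩ Nmj) X αC) :
    ∀ j ∈ C ∩ Nmn, αC j = αY j := by
    classical
  set ε := epsY δA δB Nmn Nmj αY Y with hεdef
  obtain ⟨⟨hInj, hMap⟩, hMin⟩ := hαY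
  -- basic facts
  have hεpos : 0 < ε := lt_of_le_of_lt (norm_nonneg _) (hX ⟨0, Nat.lt_of_lt_of_le hnA hnAn.le⟩)
  have hεhalf : ε ≤ δB / 2 := epsY_le_half δA δB Nmn Nmj αY Y
  have hδBK : δB ≤ δK := by rcases hK with h | h <;> simp [h] <;> linarith
  have hpart : ∀ k : Fin n, k ∈ Nmn ∨ k ∈ Nmj := by
    intro k
    rcases hmm with ⟨h1, h2, _⟩ | ⟨h1, h2, _⟩ <;> subst h1 <;> subst h2 <;>
      simp [grpA, grpB] <;> omega
  -- Y matches perfectly under αY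
  have hmatch0 : ∀ i ∈ Nmn, Y i = Y (αY i) := by
    obtain ⟨α, hαm, hαeq⟩ := hY.1
    have hc0 : matchCost Nmn Y α = 0 := by
      unfold matchCost
      rw [Finset.sum_congr rfl fun i hi => by rw [hαeq i hi]]
      simp
    have hle := hMin α hαm
    rw [hc0] at hle
    have hs0 : ∑ j ∈ Nmn, ‖Y j - Y (αY j)‖ ^ 2 = 0 := by
      have h1 : (0 : ℝ) ≤ ∑ j ∈ Nmn, ‖Y j - Y (αY j)‖ ^ 2 :=
        Finset.sum_nonneg fun j _ => by positivity
      have h2 := Real.sqrt_eq_zero h1 |>.mp (le_antisymm hle (Real.sqrt_nonneg _))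
      exact h2
    intro i hi
    have := (Finset.sum_eq_zero_iff_of_nonneg (fun j _ => by positivity)).mp hs0 i hi
    have : ‖Y i - Y (αY i)‖ = 0 := by
      have := sq_eq_zero_iff.mp this
      exact this
    rw [← sub_eq_zero]
    exact norm_eq_zero.mp this
  -- separation facts
  have hsep0 : ∀ i ∈ Nmn, ∀ j ∈ Nmj, j ≠ αY i → 6 * ε ≤ ‖Y i - Y j‖ := by
    intro i hi j hj hne
    have := epsY_le_norm δA δB Nmn Nmj αY Y hi hj hne
    linarith
  have hsepK : ∀ i ∈ Nmn, ∀ j ∈ Nmj, j ≠ αY i → 2 * ε ≤ |δK - ‖Y i - Y j‖| := by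
    intro i hi j hj hne
    rcases hK with h | h
    · have := epsY_le_absA δA δB Nmn Nmj αY Y hi hj hne; rw [h]; linarith
    · have := epsY_le_absB δA δB Nmn Nmj αY Y hi hj hne; rw [h]; linarith
  -- triangle inequality helper
  have tri : ∀ a b : Fin n, ‖X a - X b‖ ≤ ‖X a - Y a‖ + ‖Y a - Y b‖ + ‖X b - Y b‖ := by
    intro a b
    calc ‖X a - X b‖ ≤ ‖X a - Y a‖ + ‖Y a - Y b‖ + ‖Y b - X b‖ := by
          simpa [dist_eq_norm] using dist_triangle4 (X a) (Y a) (Y b) (X b)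
      _ = ‖X a - Y a‖ + ‖Y a - Y b‖ + ‖X b - Y b‖ := by rw [norm_sub_rev (Y b)]
  have triY : ∀ a b : Fin n, ‖Y a - Y b‖ ≤ ‖X a - Y a‖ + ‖X a - X b‖ + ‖X b - Y b‖ := by
    intro a b
    calc ‖Y a - Y b‖ ≤ ‖Y a - X a‖ + ‖X a - X b‖ + ‖X b - Y b‖ := by
          simpa [dist_eq_norm] using dist_triangle4 (Y a) (X a) (X b) (Y b)
      _ = ‖X a - Y a‖ + ‖X a - X b‖ + ‖X b - Y b‖ := by rw [norm_sub_rev (Y a)]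
  -- Step 1: αY i ∈ C for i ∈ C ∩ Nmn
  have key : ∀ i ∈ C ∩ Nmn, αY i ∈ C := by
    intro i hi
    obtain ⟨hiC, hiN⟩ := Finset.mem_inter.mp hi
    have main : ∀ b ∈ C, b ≠ αY i → ‖X (αY i) - X b‖ ≤ δK := by
      intro b hbC hbne
      by_cases hbi : b = i
      · subst hbi
        have h1 := tri (αY b) b
        rw [← hmatch0 b hiN] at h1
        simp only [sub_self, norm_zero] at h1
        have hXα : ‖X (αY b) - Y b‖ < ε := by rw [hmatch0 b hiN]; exact hX _
        have := hX b
        linarith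
      · -- let j be the majority representative of b
        obtain hbmn | hbmj := hpart b
        · -- b ∈ Nmn, use j = αY b
          have hjne : αY b ≠ αY i := fun h => hbi (hInj hbmn hiN h)
          have hsep := hsepK i hiN (αY b) (hMap b hbmn) hjne
          have hYb : Y (αY b) = Y b := (hmatch0 b hbmn).symm
          rw [hYb] at hsep
          have hXb : ‖X i - X b‖ ≤ δK := hC.1 i hiC b hbC (fun h => hbi h.symm)
          have hub := triY i b
          have := hX i; have := hX b
          have hYle : ‖Y i - Y b‖ ≤ δK - 2 * ε := by
            rcases abs_cases (δK - ‖Y i - Y b‖) with ⟨h1, _⟩ | ⟨h1, _⟩ <;> linarith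
          have h2 := tri (αY i) b
          rw [← hmatch0 i hiN] at h2
          have hXα : ‖X (αY i) - Y i‖ < ε := by rw [hmatch0 i hiN]; exact hX _
          linarith
        · -- b ∈ Nmj
          have hsep := hsepK i hiN b hbmj hbne
          have hXb : ‖X i - X b‖ ≤ δK := hC.1 i hiC b hbC (fun h => hbi h.symm)
          have hub := triY i b
          have := hX i; have := hX b
          have hYle : ‖Y i - Y b‖ ≤ δK - 2 * ε := by
            rcases abs_cases (δK - ‖Y i - Y b‖) with ⟨h1, _⟩ | ⟨h1, _⟩ <;> linarith
          have h2 := tri (αY i) b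
          rw [← hmatch0 i hiN] at h2
          have hXα : ‖X (αY i) - Y i‖ < ε := by rw [hmatch0 i hiN]; exact hX _
          linarith
    have hpcl : IsPCl δK X (insert (αY i) C) := by
      intro a ha b hb hab
      rcases Finset.mem_insert.mp ha with ha' | ha' <;>
        rcases Finset.mem_insert.mp hb with hb' | hb'
      · exact absurd (ha'.trans hb'.symm) hab
      · rw [ha']; exact main b hb' (fun h => hab (ha'.trans h.symm))
      · rw [hb', norm_sub_rev]; exact main a ha' (fun h => hab (h.trans hb'.symm))
      · exact hC.1 a ha' b hb' hab
    have heq := hC.2 _ hpcl (Finset.subset_insert _ _)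
    rw [← heq]
    exact Finset.mem_insert_self _ _
  -- αY restricted is a matching C∩Nmn → C∩Nmj
  have hβ : IsMatching (C ∩ Nmn) (C ∩ Nmj) αY := by
    constructor
    · exact hInj.mono (by intro x hx; exact Finset.mem_inter.mp hx |>.2)
    · intro i hi
      exact Finset.mem_inter.mpr ⟨key i hi, hMap i (Finset.mem_inter.mp hi).2⟩
  have hle := hαC.2 αY hβ
  have hsum : ∑ j ∈ C ∩ Nmn, ‖X j - X (αC j)‖ ^ 2 ≤ ∑ j ∈ C ∩ Nmn, ‖X j - X (αY j)‖ ^ 2 := by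
    have hny : (0 : ℝ) ≤ ∑ j ∈ C ∩ Nmn, ‖X j - X (αY j)‖ ^ 2 :=
      Finset.sum_nonneg fun j _ => by positivity
    exact (Real.sqrt_le_sqrt_iff hny).mp hle
  -- term bounds
  have hsmall : ∀ k ∈ C ∩ Nmn, ‖X k - X (αY k)‖ < 2 * ε := by
    intro k hk
    have hkN := (Finset.mem_inter.mp hk).2
    have h := tri k (αY k)
    rw [← hmatch0 k hkN] at h
    simp only [sub_self, norm_zero] at h
    have hXα : ‖X (αY k) - Y k‖ < ε := by rw [hmatch0 k hkN]; exact hX _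
    have := hX k
    linarith
  have hbig : ∀ k ∈ C ∩ Nmn, αC k ≠ αY k → 4 * ε < ‖X k - X (αC k)‖ := by
    intro k hk hkne
    have hkN := (Finset.mem_inter.mp hk).2
    have hαCk : αC k ∈ Nmj := (Finset.mem_inter.mp (hαC.1.2 k hk)).2
    have hsep := hsep0 k hkN (αC k) hαCk hkne
    have h := triY k (αC k)
    have := hX k; have := hX (αC k)
    linarith
  -- conclusion
  intro j hj
  by_contra hne
  set D := (C ∩ Nmn).filter (fun k => αC k ≠ αY k) with hD
  have hjD : j ∈ D := Finset.mem_filter.mpr ⟨hj, hne⟩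
  have hsplit := Finset.sum_filter_add_sum_filter_not (C ∩ Nmn)
    (fun k => αC k ≠ αY k) (fun k => ‖X k - X (αC k)‖ ^ 2)
  have hsplit' := Finset.sum_filter_add_sum_filter_not (C ∩ Nmn)
    (fun k => αC k ≠ αY k) (fun k => ‖X k - X (αY k)‖ ^ 2)
  have heqcompl : ∑ k ∈ (C ∩ Nmn).filter (fun k => ¬αC k ≠ αY k), ‖X k - X (αC k)‖ ^ 2 =
      ∑ k ∈ (C ∩ Nmn).filter (fun k => ¬αC k ≠ αY k), ‖X k - X (αY k)‖ ^ 2 := by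
    apply Finset.sum_congr rfl
    intro k hk
    have := (Finset.mem_filter.mp hk).2
    simp only [not_not] at this
    rw [this]
  have hDle : ∑ k ∈ D, ‖X k - X (αC k)‖ ^ 2 ≤ ∑ k ∈ D, ‖X k - X (αY k)‖ ^ 2 := by
    rw [hD]
    linarith [hsum, hsplit, hsplit', heqcompl]
  have hDlt : ∑ k ∈ D, ‖X k - X (αY k)‖ ^ 2 < ∑ k ∈ D, ‖X k - X (αC k)‖ ^ 2 := by
    apply Finset.sum_lt_sum_of_nonempty ⟨j, hjD⟩
    intro k hk
    obtain ⟨hkm, hkne⟩ := Finset.mem_filter.mp hk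
    have h1 := hsmall k hkm
    have h2 := hbig k hkm hkne
    have h3 : (0 : ℝ) ≤ ‖X k - X (αY k)‖ := norm_nonneg _
    nlinarith
  linarith
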